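/- arXiv:2303.03108 — 2 statements merged into one kernel-verified Lean document; each statement's English description precedes it below -/
import Mathlib

section
/- Let L : ℝ^d → ℝ be differentiable and γ₁-Lipschitz smooth, let θ ∈ ℝ^d, and let η, ρ ≥ 0 and α ≥ 0 be constants. Let h_loss and h_norm be random vectors in ℝ^d on some probability space such that E[h_loss] = ∇L(θ), ‖h_loss‖ ≤ G̃ almost surely, and ‖h_norm‖ ≤ G_n almost surely, for constants G̃, G_n ≥ 0. Then the updated point θ' = θ − η(h_loss + α ρ h_norm) satisfies E[L(θ')] ≤ L(θ) − η‖∇L(θ)‖² + η ρ α G̃ G_n + γ₁ η² (G̃² + α² ρ² G_n²). -/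
open MeasureTheory
open scoped ProbabilityTheory

open scoped RealInnerProductSpace

set_option maxHeartbeats 1000000

lemma descent_lemma {F : Type*} [NormedAddCommGroup F] [InnerProductSpace ℝ F] [CompleteSpace F]
    (L : F → ℝ) (γ : ℝ) (hL : Differentiable ℝ L)
    (hsm : ∀ x y, ‖gradient L x - gradient L y‖ ≤ γ * ‖x - y‖) (x y : F) :
    L y ≤ L x + ⟪gradient L x, y - x⟫ + γ / 2 * ‖y - x‖ ^ 2 := by
  set v := y - x with hv
  have hfd : ∀ z : F, fderiv ℝ L z = InnerProductSpace.toDual ℝ F (gradient L z) := by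
    intro z
    exact ((hL z).hasGradientAt.hasFDerivAt).fderiv
  have hg : ∀ t : ℝ, HasDerivAt (fun t : ℝ => L (x + t • v)) ⟪gradient L (x + t • v), v⟫ t := by
    intro t
    have h1 : HasDerivAt (fun t : ℝ => x + t • v) v t := by
      simpa using ((hasDerivAt_id t).smul_const v).const_add x
    have h2 := (hL (x + t • v)).hasFDerivAt.comp_hasDerivAt t h1
    rw [hfd] at h2
    simpa [InnerProductSpace.toDual_apply_apply, Function.comp_def] using h2
  have hgradcont : Continuous (gradient L) := by
    rcases le_or_gt γ 0 with h | h
    · have : ∀ z w : F, gradient L z = gradient L w := by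
        intro z w
        have := hsm z w
        have h2 : γ * ‖z - w‖ ≤ 0 := mul_nonpos_of_nonpos_of_nonneg h (norm_nonneg _)
        have : ‖gradient L z - gradient L w‖ ≤ 0 := le_trans this h2
        have := le_antisymm this (norm_nonneg _)
        rwa [norm_eq_zero, sub_eq_zero] at this
      have hc : gradient L = fun _ => gradient L x := funext fun z => this z x
      rw [hc]; exact continuous_const
    · exact (LipschitzWith.of_dist_le_mul (K := γ.toNNReal) (fun a b => by
        rw [Real.coe_toNNReal γ h.le]
        simpa [dist_eq_norm] using hsm a b)).continuous
  have hcont : Continuous fun t : ℝ => ⟪gradient L (x + t • v), v⟫ := by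
    exact (Continuous.inner (hgradcont.comp (continuous_const.add (continuous_id.smul continuous_const))) continuous_const)
  have hFTC : L y - L x = ∫ t in (0:ℝ)..1, ⟪gradient L (x + t • v), v⟫ := by
    have := intervalIntegral.integral_eq_sub_of_hasDerivAt (f := fun t : ℝ => L (x + t • v))
      (a := 0) (b := 1) (fun t _ => hg t) (hcont.intervalIntegrable 0 1)
    simp only [one_smul, zero_smul, add_zero] at this
    rw [this]; congr 1 <;> simp [hv]
  have hbound : ∀ t ∈ Set.Icc (0:ℝ) 1,
      ⟪gradient L (x + t • v), v⟫ ≤ ⟪gradient L x, v⟫ + γ * ‖v‖ ^ 2 * t := by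
    intro t ht
    have h1 : ⟪gradient L (x + t • v) - gradient L x, v⟫ ≤ γ * ‖v‖ ^ 2 * t := by
      calc ⟪gradient L (x + t • v) - gradient L x, v⟫
          ≤ ‖gradient L (x + t • v) - gradient L x‖ * ‖v‖ := real_inner_le_norm _ _
        _ ≤ γ * ‖x + t • v - x‖ * ‖v‖ := by
            exact mul_le_mul_of_nonneg_right (hsm _ _) (norm_nonneg _)
        _ = γ * ‖v‖ ^ 2 * t := by
            rw [add_sub_cancel_left, norm_smul, Real.norm_eq_abs, abs_of_nonneg ht.1]
            ring
    have := inner_sub_left (𝕜 := ℝ) (gradient L (x + t • v)) (gradient L x) v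
    linarith [h1, this ▸ h1]
  have hineq : ∫ t in (0:ℝ)..1, ⟪gradient L (x + t • v), v⟫
      ≤ ∫ t in (0:ℝ)..1, (⟪gradient L x, v⟫ + γ * ‖v‖ ^ 2 * t) := by
    apply intervalIntegral.integral_mono_on (by norm_num)
      (hcont.intervalIntegrable 0 1)
      ((continuous_const.add (continuous_const.mul continuous_id)).intervalIntegrable 0 1)
    exact hbound
  have hval : ∫ t in (0:ℝ)..1, (⟪gradient L x, v⟫ + γ * ‖v‖ ^ 2 * t)
      = ⟪gradient L x, v⟫ + γ / 2 * ‖v‖ ^ 2 := by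
    have h1 : IntervalIntegrable (fun t : ℝ => γ * ‖v‖ ^ 2 * t) MeasureTheory.volume 0 1 :=
      (by continuity : Continuous fun t : ℝ => γ * ‖v‖ ^ 2 * t).intervalIntegrable 0 1
    rw [intervalIntegral.integral_add intervalIntegrable_const h1,
      intervalIntegral.integral_const_mul, integral_id]
    simp
    ring
  linarith [hFTC ▸ (hineq.trans_eq hval)]

/-- **Per-iteration descent inequality of GAM.**
Let `L : ℝ^d → ℝ` be differentiable and `γ₁`-Lipschitz smooth, and let `hloss`, `hnorm` be
random vectors with `E[hloss] = ∇L(θ)`, `‖hloss‖ ≤ G̃` a.s., `‖hnorm‖ ≤ Gn` a.s. Then the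
updated point `θ' = θ - η (hloss + α ρ hnorm)` satisfies
`E[L(θ')] ≤ L(θ) - η‖∇L(θ)‖² + η ρ α G̃ Gn + γ₁ η² (G̃² + α² ρ² Gn²)`. -/
theorem gam_descent_inequality
    {d : ℕ} {Ω : Type*} [MeasureSpace Ω] [IsProbabilityMeasure (ℙ : Measure Ω)]
    (L : EuclideanSpace ℝ (Fin d) → ℝ) (γ₁ : ℝ) (hγ₁ : 0 ≤ γ₁)
    (hL : Differentiable ℝ L)
    (hsmooth : ∀ θ₁ θ₂ : EuclideanSpace ℝ (Fin d),
      ‖gradient L θ₁ - gradient L θ₂‖ ≤ γ₁ * ‖θ₁ - θ₂‖)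
    (θ : EuclideanSpace ℝ (Fin d)) (η ρ α : ℝ) (hη : 0 ≤ η) (hρ : 0 ≤ ρ) (hα : 0 ≤ α)
    (hloss hnorm : Ω → EuclideanSpace ℝ (Fin d))
    (hlossMeas : AEStronglyMeasurable hloss (ℙ : Measure Ω)) (hnormMeas : AEStronglyMeasurable hnorm (ℙ : Measure Ω))
    (Gt Gn : ℝ) (hGt : 0 ≤ Gt) (hGn : 0 ≤ Gn)
    (hmean : ∫ ω, hloss ω ∂(ℙ : Measure Ω) = gradient L θ)
    (hlossBdd : ∀ᵐ ω ∂(ℙ : Measure Ω), ‖hloss ω‖ ≤ Gt)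
    (hnormBdd : ∀ᵐ ω ∂(ℙ : Measure Ω), ‖hnorm ω‖ ≤ Gn) :
    ∫ ω, L (θ - η • (hloss ω + (α * ρ) • hnorm ω)) ∂(ℙ : Measure Ω)
      ≤ L θ - η * ‖gradient L θ‖ ^ 2 + η * ρ * α * Gt * Gn
          + γ₁ * η ^ 2 * (Gt ^ 2 + α ^ 2 * ρ ^ 2 * Gn ^ 2) := by
  set g := gradient L θ with hg
  have hlossInt : Integrable hloss (ℙ : Measure Ω) :=
    ⟨hlossMeas, HasFiniteIntegral.of_bounded hlossBdd⟩
  -- gradient norm bound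
  have hgbdd : ‖g‖ ≤ Gt := by
    have h := norm_integral_le_of_norm_le_const (μ := (ℙ : Measure Ω)) hlossBdd
    rw [hmean] at h
    simpa using h
  -- the pointwise a.e. bound
  have hptwise : ∀ᵐ ω ∂(ℙ : Measure Ω),
      L (θ - η • (hloss ω + (α * ρ) • hnorm ω))
        ≤ L θ - η * ⟪g, hloss ω⟫ + η * ρ * α * Gt * Gn
            + γ₁ * η ^ 2 * (Gt ^ 2 + α ^ 2 * ρ ^ 2 * Gn ^ 2) := by
    filter_upwards [hlossBdd, hnormBdd] with ω h1 h2
    set u := hloss ω + (α * ρ) • hnorm ω with hu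
    have hdesc := descent_lemma L γ₁ hL hsmooth θ (θ - η • u)
    have hsub : θ - η • u - θ = -(η • u) := by abel
    rw [hsub] at hdesc
    have hinn : ⟪g, -(η • u)⟫ = -(η * ⟪g, hloss ω⟫) - (η * (α * ρ)) * ⟪g, hnorm ω⟫ := by
      rw [inner_neg_right, real_inner_smul_right, hu, inner_add_right, real_inner_smul_right]
      ring
    have hinn2 : ⟪g, hnorm ω⟫ ≥ -(Gt * Gn) := by
      have := abs_real_inner_le_norm g (hnorm ω)
      have h3 : ‖g‖ * ‖hnorm ω‖ ≤ Gt * Gn :=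
        mul_le_mul hgbdd h2 (norm_nonneg _) hGt
      cases abs_le.mp (this.trans h3) with
      | intro a b => linarith
    have hnormu : ‖u‖ ^ 2 ≤ 2 * (Gt ^ 2 + α ^ 2 * ρ ^ 2 * Gn ^ 2) := by
      have h4 : ‖u‖ ≤ Gt + α * ρ * Gn := by
        calc ‖u‖ ≤ ‖hloss ω‖ + ‖(α * ρ) • hnorm ω‖ := norm_add_le _ _
          _ ≤ Gt + α * ρ * Gn := by
              rw [norm_smul, Real.norm_eq_abs, abs_of_nonneg (mul_nonneg hα hρ)]
              exact add_le_add h1 (mul_le_mul_of_nonneg_left h2 (mul_nonneg hα hρ))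
      have h5 : ‖u‖ ^ 2 ≤ (Gt + α * ρ * Gn) ^ 2 :=
        pow_le_pow_left₀ (norm_nonneg _) h4 2
      nlinarith [sq_nonneg (Gt - α * ρ * Gn)]
    have hq : γ₁ / 2 * ‖-(η • u)‖ ^ 2 ≤ γ₁ * η ^ 2 * (Gt ^ 2 + α ^ 2 * ρ ^ 2 * Gn ^ 2) := by
      rw [norm_neg, norm_smul, Real.norm_eq_abs, abs_of_nonneg hη, mul_pow]
      nlinarith [sq_nonneg η, mul_nonneg (mul_nonneg hγ₁ (sq_nonneg η)) (sub_nonneg.mpr hnormu)]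
    rw [hinn] at hdesc
    have hterm : -((η * (α * ρ)) * ⟪g, hnorm ω⟫) ≤ η * ρ * α * Gt * Gn := by
      have hc : 0 ≤ η * (α * ρ) := mul_nonneg hη (mul_nonneg hα hρ)
      have h6 := mul_le_mul_of_nonneg_left hinn2.le hc
      nlinarith [h6]
    linarith
  -- integrability of the LHS
  have hθ'Meas : AEStronglyMeasurable
      (fun ω => θ - η • (hloss ω + (α * ρ) • hnorm ω)) (ℙ : Measure Ω) :=
    aestronglyMeasurable_const.sub ((hlossMeas.add (hnormMeas.const_smul (α * ρ))).const_smul η)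
  have hLmeas : AEStronglyMeasurable
      (fun ω => L (θ - η • (hloss ω + (α * ρ) • hnorm ω))) (ℙ : Measure Ω) :=
    hL.continuous.comp_aestronglyMeasurable hθ'Meas
  obtain ⟨C, hC⟩ := (isCompact_closedBall θ (η * (Gt + α * ρ * Gn))).exists_bound_of_continuousOn
    (hL.continuous.continuousOn)
  have hLbdd : ∀ᵐ ω ∂(ℙ : Measure Ω),
      ‖L (θ - η • (hloss ω + (α * ρ) • hnorm ω))‖ ≤ C := by
    filter_upwards [hlossBdd, hnormBdd] with ω h1 h2
    apply hC
    rw [Metric.mem_closedBall, dist_eq_norm]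
    have : ‖θ - η • (hloss ω + (α * ρ) • hnorm ω) - θ‖ = ‖η • (hloss ω + (α * ρ) • hnorm ω)‖ := by
      rw [show θ - η • (hloss ω + (α * ρ) • hnorm ω) - θ = -(η • (hloss ω + (α * ρ) • hnorm ω)) by abel, norm_neg]
    rw [this, norm_smul, Real.norm_eq_abs, abs_of_nonneg hη]
    apply mul_le_mul_of_nonneg_left _ hη
    calc ‖hloss ω + (α * ρ) • hnorm ω‖ ≤ ‖hloss ω‖ + ‖(α * ρ) • hnorm ω‖ := norm_add_le _ _
      _ ≤ Gt + α * ρ * Gn := by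
          rw [norm_smul, Real.norm_eq_abs, abs_of_nonneg (mul_nonneg hα hρ)]
          exact add_le_add h1 (mul_le_mul_of_nonneg_left h2 (mul_nonneg hα hρ))
  have hLInt : Integrable (fun ω => L (θ - η • (hloss ω + (α * ρ) • hnorm ω))) (ℙ : Measure Ω) :=
    ⟨hLmeas, HasFiniteIntegral.of_bounded hLbdd⟩
  have hRInt : Integrable (fun ω => L θ - η * ⟪g, hloss ω⟫ + η * ρ * α * Gt * Gn
      + γ₁ * η ^ 2 * (Gt ^ 2 + α ^ 2 * ρ ^ 2 * Gn ^ 2)) (ℙ : Measure Ω) := by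
    apply Integrable.add
    apply Integrable.add
    · exact (integrable_const _).sub ((hlossInt.const_inner g).const_mul η)
    · exact integrable_const _
    · exact integrable_const _
  have hmono := integral_mono_ae hLInt hRInt hptwise
  refine hmono.trans_eq ?_
  have hinteq : ∫ ω, ⟪g, hloss ω⟫ ∂(ℙ : Measure Ω) = ‖g‖ ^ 2 := by
    rw [integral_inner hlossInt g, hmean, real_inner_self_eq_norm_sq]
  calc ∫ ω, (L θ - η * ⟪g, hloss ω⟫ + η * ρ * α * Gt * Gn
        + γ₁ * η ^ 2 * (Gt ^ 2 + α ^ 2 * ρ ^ 2 * Gn ^ 2)) ∂(ℙ : Measure Ω)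
      = ∫ ω, ((L θ + η * ρ * α * Gt * Gn + γ₁ * η ^ 2 * (Gt ^ 2 + α ^ 2 * ρ ^ 2 * Gn ^ 2))
          - η * ⟪g, hloss ω⟫) ∂(ℙ : Measure Ω) := by
        congr 1; funext ω; ring
    _ = (L θ + η * ρ * α * Gt * Gn + γ₁ * η ^ 2 * (Gt ^ 2 + α ^ 2 * ρ ^ 2 * Gn ^ 2))
          - η * ∫ ω, ⟪g, hloss ω⟫ ∂(ℙ : Measure Ω) := by
        rw [integral_sub (integrable_const _) ((hlossInt.const_inner g).const_mul η),
          integral_const, integral_const_mul]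
        simp
    _ = L θ - η * ‖g‖ ^ 2 + η * ρ * α * Gt * Gn
          + γ₁ * η ^ 2 * (Gt ^ 2 + α ^ 2 * ρ ^ 2 * Gn ^ 2) := by
        rw [hinteq]; ring
end

section
/- Let L^oracle : ℝ^d → ℝ be differentiable and γ₁-Lipschitz smooth with |L^oracle(θ)| ≤ M for all θ. Let (Ω, F, P) be a probability space with a filtration (F_t)_{t≥1}, and let constants G̃, G_n ≥ 0, α ≥ 0, η₀ > 0, ρ₀ > 0 be given; set η_t = η₀/√t and ρ_t = ρ₀/√t. Let (θ_t)_{t≥1} be random vectors in ℝ^d with θ_t measurable with respect to F_t, generated by θ_{t+1} = θ_t − η_t (h_t^loss + α ρ_t h_t^norm), where h_t^loss and h_t^norm are F_{t+1}-measurable random vectors satisfying: (a) E[h_t^loss | F_t] = ∇L^oracle(θ_t) almost surely, (b) ‖h_t^loss‖ ≤ G̃ almost surely, and (c) ‖h_t^norm‖ ≤ G_n almost surely. Then there exist constants C₁' and C₂' depending only on γ₁, G̃, G_n, M, η₀, ρ₀, and α such that for every T ≥ 1: (1/T) Σ_{t=1}^T E[ ‖∇L^oracle(θ_t)‖² ]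 ≤ (C₁' + C₂' log T)/√T. -/
open MeasureTheory

open Finset RealInnerProductSpace

open RealInnerProductSpace in
lemma gam_descent {d : ℕ} {f : EuclideanSpace ℝ (Fin d) → ℝ} {γ : ℝ}
    (hf : Differentiable ℝ f) (hγ : 0 ≤ γ)
    (hlip : ∀ x y, ‖gradient f x - gradient f y‖ ≤ γ * ‖x - y‖)
    (x y : EuclideanSpace ℝ (Fin d)) :
    f y ≤ f x + ⟪gradient f x, y - x⟫ + γ / 2 * ‖y - x‖ ^ 2 := by
  set v := y - x with hv
  have hcont : Continuous (gradient f) := by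
    have : LipschitzWith γ.toNNReal (gradient f) := by
      refine LipschitzWith.of_dist_le_mul fun a b => ?_
      rw [dist_eq_norm, dist_eq_norm, Real.coe_toNNReal γ hγ]
      exact hlip a b
    exact this.continuous
  have hline : ∀ t : ℝ, HasDerivAt (fun t : ℝ => x + t • v) v t := fun t => by
    simpa using ((hasDerivAt_id t).smul_const v).const_add x
  have hg : ∀ t : ℝ, HasDerivAt (fun t => f (x + t • v)) ⟪gradient f (x + t • v), v⟫ t := by
    intro t
    have hfd := ((hf (x + t • v)).hasGradientAt.hasFDerivAt).comp_hasDerivAt t (hline t)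
    simpa [InnerProductSpace.toDual_apply_apply, Function.comp_def] using hfd
  have hic : Continuous fun t : ℝ => ⟪gradient f (x + t • v), v⟫ :=
    (hcont.comp (by continuity)).inner continuous_const
  have hint : (∫ t in (0:ℝ)..1, ⟪gradient f (x + t • v), v⟫) = f y - f x := by
    have hxy : x + v = y := by rw [hv]; abel
    have := intervalIntegral.integral_eq_sub_of_hasDerivAt
      (f := fun t : ℝ => f (x + t • v)) (fun t _ => hg t) (hic.intervalIntegrable 0 1)
    simpa [hxy] using this
  have hmono : (∫ t in (0:ℝ)..1, ⟪gradient f (x + t • v), v⟫)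
      ≤ ∫ t in (0:ℝ)..1, (⟪gradient f x, v⟫ + γ * ‖v‖ ^ 2 * t) := by
    refine intervalIntegral.integral_mono_on zero_le_one (hic.intervalIntegrable 0 1)
      ((by continuity : Continuous fun t : ℝ => ⟪gradient f x, v⟫ + γ * ‖v‖ ^ 2 * t).intervalIntegrable 0 1) ?_
    intro t ht
    have h1 : ⟪gradient f (x + t • v), v⟫ - ⟪gradient f x, v⟫
        = ⟪gradient f (x + t • v) - gradient f x, v⟫ := (inner_sub_left _ _ _).symm
    have h2 : ⟪gradient f (x + t • v) - gradient f x, v⟫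
        ≤ ‖gradient f (x + t • v) - gradient f x‖ * ‖v‖ := real_inner_le_norm _ _
    have h3 : ‖gradient f (x + t • v) - gradient f x‖ ≤ γ * (t * ‖v‖) := by
      have := hlip (x + t • v) x
      simpa [norm_smul, abs_of_nonneg ht.1] using this
    nlinarith [norm_nonneg v, ht.1, norm_nonneg (gradient f (x + t • v) - gradient f x)]
  have hval : (∫ t in (0:ℝ)..1, (⟪gradient f x, v⟫ + γ * ‖v‖ ^ 2 * t))
      = ⟪gradient f x, v⟫ + γ / 2 * ‖v‖ ^ 2 := by
    rw [intervalIntegral.integral_add (intervalIntegrable_const)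
      ((continuous_const.mul continuous_id').intervalIntegrable 0 1) (g := fun t : ℝ => γ * ‖v‖ ^ 2 * t),
      intervalIntegral.integral_const_mul, integral_id, intervalIntegral.integral_const]
    simp
    ring
  rw [hint, hval] at hmono
  linarith
open MeasureTheory Finset
open RealInnerProductSpace in
lemma gam_grad_bound {d : ℕ} {f : EuclideanSpace ℝ (Fin d) → ℝ} {γ M : ℝ}
    (hf : Differentiable ℝ f) (hγ : 0 ≤ γ)
    (hlip : ∀ x y, ‖gradient f x - gradient f y‖ ≤ γ * ‖x - y‖)
    (hM : ∀ z, |f z| ≤ M)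
    (hdes : ∀ x y : EuclideanSpace ℝ (Fin d),
      f y ≤ f x + ⟪gradient f x, y - x⟫ + γ / 2 * ‖y - x‖ ^ 2)
    (x : EuclideanSpace ℝ (Fin d)) :
    ‖gradient f x‖ ^ 2 ≤ 4 * γ * M := by
  have hM0 : 0 ≤ M := (abs_nonneg _).trans (hM x)
  set g := gradient f x with hgdef
  have key : ∀ s : ℝ, 0 ≤ s → s * ‖g‖ ^ 2 * (1 - γ * s / 2) ≤ 2 * M := by
    intro s hs
    have hd := hdes x (x - s • g)
    have h1 : (x - s • g) - x = -(s • g) := by abel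
    rw [h1] at hd
    have h2 : ⟪g, -(s • g)⟫ = -(s * ‖g‖ ^ 2) := by
      rw [inner_neg_right, real_inner_smul_right, real_inner_self_eq_norm_sq]
    have h3 : ‖-(s • g)‖ ^ 2 = s ^ 2 * ‖g‖ ^ 2 := by
      rw [norm_neg, norm_smul, Real.norm_eq_abs, mul_pow, sq_abs]
    rw [h2, h3] at hd
    have hb1 := abs_le.mp (hM x)
    have hb2 := abs_le.mp (hM (x - s • g))
    nlinarith
  by_cases hγ0 : γ = 0
  · subst hγ0
    have hng : 0 ≤ ‖g‖ ^ 2 := by positivity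
    rcases eq_or_lt_of_le hng with h | h
    · simpa [← h] using le_refl (0:ℝ)
    · exfalso
      have := key ((2 * M + 1) / ‖g‖ ^ 2) (by positivity)
      rw [div_mul_eq_mul_div, mul_div_assoc] at this
      rw [div_self (ne_of_gt h)] at this
      nlinarith
  · have hγp : 0 < γ := lt_of_le_of_ne hγ (Ne.symm hγ0)
    have h2 := key (1 / γ) (by positivity)
    have h6 : (1 / γ) * ‖g‖ ^ 2 * (1 - γ * (1 / γ) / 2) = ‖g‖ ^ 2 / (2 * γ) := by
      field_simp
      ring
    rw [h6] at h2
    rw [div_le_iff₀ (by positivity)] at h2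
    linarith

lemma gam_harmonic (T : ℕ) : ∑ t ∈ Finset.Icc 1 T, (1 / (t:ℝ)) ≤ 1 + Real.log T := by
  have h1 := harmonic_le_one_add_log T
  have h2 : ((harmonic T : ℚ) : ℝ) = ∑ t ∈ Finset.Icc 1 T, (1 / (t:ℝ)) := by
    rw [harmonic_eq_sum_Icc]
    push_cast
    simp [one_div]
  linarith [h2 ▸ h1]

lemma gam_telescope (f : ℕ → ℝ) (T : ℕ) :
    ∑ t ∈ Finset.Icc 1 T, (f t - f (t + 1)) = f 1 - f (T + 1) := by
  induction T with
  | zero => simp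
  | succ n ih =>
    rw [Finset.sum_Icc_succ_top (Nat.le_add_left 1 n), ih]
    ring

lemma euclid_abs_le_norm {d : ℕ} (x : EuclideanSpace ℝ (Fin d)) (i : Fin d) : |x i| ≤ ‖x‖ := by
  rw [EuclideanSpace.norm_eq, ← Real.sqrt_sq_eq_abs]
  apply Real.sqrt_le_sqrt
  have : ‖x i‖ ^ 2 ≤ ∑ j, ‖x j‖ ^ 2 :=
    Finset.single_le_sum (f := fun j => ‖x j‖ ^ 2) (fun j _ => by positivity) (Finset.mem_univ i)
  simpa [Real.norm_eq_abs, sq_abs] using this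
open MeasureTheory Finset
open RealInnerProductSpace in
lemma gam_inner_condexp {Ω : Type} {mΩ : MeasurableSpace Ω} {μ : Measure Ω}
    [IsProbabilityMeasure μ] {m : MeasurableSpace Ω} (hm : m ≤ mΩ) {d : ℕ}
    {g h : Ω → EuclideanSpace ℝ (Fin d)} {B C : ℝ}
    (hgm : StronglyMeasurable[m] g) (hgb : ∀ ω, ‖g ω‖ ≤ B)
    (hhm : AEStronglyMeasurable[mΩ] h μ) (hhb : ∀ᵐ ω ∂μ, ‖h ω‖ ≤ C)
    (hce : μ[h|m] =ᵐ[μ] g) :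
    ∫ ω, ⟪g ω, h ω⟫ ∂μ = ∫ ω, ‖g ω‖ ^ 2 ∂μ := by
  letI : MeasurableSpace Ω := mΩ
  have hgm0 : StronglyMeasurable[mΩ] g := hgm.mono hm
  have hgint : Integrable g μ :=
    (integrable_const B).mono' hgm0.aestronglyMeasurable (ae_of_all _ hgb)
  have hhint : Integrable h μ := (integrable_const C).mono' hhm hhb
  have hgib : ∀ (i : Fin d) ω, |g ω i| ≤ B := fun i ω =>
    (euclid_abs_le_norm (g ω) i).trans (hgb ω)
  have hgi0' : ∀ i : Fin d, AEStronglyMeasurable (fun ω => g ω i) μ := fun i =>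
    ((EuclideanSpace.proj (𝕜 := ℝ) i).continuous.comp_stronglyMeasurable
      (hgm.mono hm)).aestronglyMeasurable
  have hhi' : ∀ i : Fin d, AEStronglyMeasurable (fun ω => h ω i) μ := fun i =>
    (EuclideanSpace.proj (𝕜 := ℝ) i).continuous.comp_aestronglyMeasurable hhm
  have hprodint : ∀ i : Fin d, Integrable (fun ω => g ω i * h ω i) μ := by
    intro i
    refine (integrable_const (B * C)).mono' ((hgi0' i).mul (hhi' i)) ?_
    filter_upwards [hhb] with ω hω
    have h2 : |h ω i| ≤ C := (euclid_abs_le_norm (h ω) i).trans hω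
    calc ‖g ω i * h ω i‖ = |g ω i| * |h ω i| := by rw [Real.norm_eq_abs, abs_mul]
    _ ≤ B * C := mul_le_mul (hgib i ω) h2 (abs_nonneg _) ((abs_nonneg _).trans (hgib i ω))
  have hsqint : ∀ i : Fin d, Integrable (fun ω => g ω i * g ω i) μ := by
    intro i
    refine (integrable_const (B * B)).mono' ((hgi0' i).mul (hgi0' i)) ?_
    refine ae_of_all _ fun ω => ?_
    calc ‖g ω i * g ω i‖ = |g ω i| * |g ω i| := by rw [Real.norm_eq_abs, abs_mul]
    _ ≤ B * B := mul_le_mul (hgib i ω) (hgib i ω) (abs_nonneg _) ((abs_nonneg _).trans (hgib i ω))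
  -- componentwise
  have hcomp : ∀ i : Fin d,
      ∫ ω, g ω i * h ω i ∂μ = ∫ ω, g ω i * g ω i ∂μ := by
    intro i
    have hgi : StronglyMeasurable[m] fun ω => g ω i :=
      (EuclideanSpace.proj (𝕜 := ℝ) i).continuous.comp_stronglyMeasurable hgm
    have hgi0 : StronglyMeasurable[mΩ] fun ω => g ω i := hgi.mono hm
    have hhi : AEStronglyMeasurable (fun ω => h ω i) μ :=
      (EuclideanSpace.proj (𝕜 := ℝ) i).continuous.comp_aestronglyMeasurable hhm
    have hhiint : Integrable (fun ω => h ω i) μ := by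
      refine (integrable_const C).mono' hhi ?_
      filter_upwards [hhb] with ω hω
      exact (euclid_abs_le_norm (h ω) i).trans hω
    have hgiint : Integrable (fun ω => g ω i) μ := by
      refine (integrable_const B).mono' hgi0.aestronglyMeasurable ?_
      exact ae_of_all _ fun ω => (euclid_abs_le_norm (g ω) i).trans (hgb ω)
    -- μ[h_i | m] =ᵐ g_i
    have hci : (fun ω => g ω i) =ᵐ[μ] μ[fun ω => h ω i|m] := by
      refine ae_eq_condExp_of_forall_setIntegral_eq hm hhiint
        (fun s _ _ => hgiint.integrableOn) (fun s hs _ => ?_)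
        hgi.aestronglyMeasurable
      have e3 : ∫ ω in s, g ω ∂μ = ∫ ω in s, h ω ∂μ := by
        rw [← setIntegral_condExp hm hhint hs]
        exact setIntegral_congr_ae (hm s hs) (hce.mono fun ω hω _ => hω.symm)
      calc ∫ ω in s, g ω i ∂μ
          = (EuclideanSpace.proj (𝕜 := ℝ) i) (∫ ω in s, g ω ∂μ) :=
            ContinuousLinearMap.integral_comp_comm (EuclideanSpace.proj (𝕜 := ℝ) i) hgint.integrableOn
        _ = (EuclideanSpace.proj (𝕜 := ℝ) i) (∫ ω in s, h ω ∂μ) := by rw [e3]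
        _ = ∫ ω in s, h ω i ∂μ :=
            (ContinuousLinearMap.integral_comp_comm (EuclideanSpace.proj (𝕜 := ℝ) i) hhint.integrableOn).symm
    have hpull := condExp_mul_of_stronglyMeasurable_left hgi (hprodint i) hhiint
    calc ∫ ω, g ω i * h ω i ∂μ
        = ∫ ω, (μ[fun ω => g ω i * h ω i|m]) ω ∂μ := (integral_condExp hm).symm
      _ = ∫ ω, g ω i * (μ[fun ω => h ω i|m]) ω ∂μ := integral_congr_ae hpull
      _ = ∫ ω, g ω i * g ω i ∂μ := by
          refine integral_congr_ae ?_
          filter_upwards [hci] with ω hω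
          rw [← hω]
  -- sum over coordinates
  have e1 : ∀ ω, ⟪g ω, h ω⟫ = ∑ i, g ω i * h ω i := by
    intro ω
    simp [PiLp.inner_apply, RCLike.inner_apply, conj_trivial, mul_comm]
  have e2 : ∀ ω, ‖g ω‖ ^ 2 = ∑ i, g ω i * g ω i := by
    intro ω
    rw [← real_inner_self_eq_norm_sq]
    simp only [PiLp.inner_apply, RCLike.inner_apply, conj_trivial]
  calc ∫ ω, ⟪g ω, h ω⟫ ∂μ
      = ∫ ω, ∑ i, g ω i * h ω i ∂μ := by simp_rw [e1]
    _ = ∑ i, ∫ ω, g ω i * h ω i ∂μ := integral_finset_sum _ fun i _ => hprodint i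
    _ = ∑ i, ∫ ω, g ω i * g ω i ∂μ := Finset.sum_congr rfl fun i _ => hcomp i
    _ = ∫ ω, ∑ i, g ω i * g ω i ∂μ := (integral_finset_sum _ fun i _ => hsqint i).symm
    _ = ∫ ω, ‖g ω‖ ^ 2 ∂μ := by simp_rw [e2]

open MeasureTheory Finset

section GamAux
open RealInnerProductSpace


set_option maxHeartbeats 1000000 in
/-- **Proposition (convergence of the oracle-loss gradients along GAM iterates).**
If `L^oracle` is differentiable, `γ₁`-Lipschitz smooth and bounded by `M`, and the GAM
iterates satisfy `θ_{t+1} = θ_t - η_t(h_t^loss + α ρ_t h_t^norm)` with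
`η_t = η₀/√t`, `ρ_t = ρ₀/√t`, where `h_t^loss`, `h_t^norm` are `F_{t+1}`-measurable,
`E[h_t^loss | F_t] = ∇L^oracle(θ_t)` a.s., `‖h_t^loss‖ ≤ G̃` a.s. and `‖h_t^norm‖ ≤ Gn`
a.s., then there are constants `C₁'`, `C₂'` depending only on `γ₁, G̃, Gn, M, η₀, ρ₀, α`
with `(1/T) Σ_{t=1}^T E‖∇L^oracle(θ_t)‖² ≤ (C₁' + C₂' log T)/√T` for all `T ≥ 1`. -/
theorem gam_oracle_convergence
    (γ₁ Gt Gn M α η₀ ρ₀ : ℝ) (hγ₁ : 0 ≤ γ₁) (hGt : 0 ≤ Gt) (hGn : 0 ≤ Gn)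
    (hα : 0 ≤ α) (hη₀ : 0 < η₀) (hρ₀ : 0 < ρ₀) :
    ∃ C₁ C₂ : ℝ,
      ∀ {d : ℕ} (Loracle : EuclideanSpace ℝ (Fin d) → ℝ),
        Differentiable ℝ Loracle →
        (∀ θ₁ θ₂ : EuclideanSpace ℝ (Fin d),
          ‖gradient Loracle θ₁ - gradient Loracle θ₂‖ ≤ γ₁ * ‖θ₁ - θ₂‖) →
        (∀ x, |Loracle x| ≤ M) →
        ∀ (Ω : Type) (mΩ : MeasurableSpace Ω) (μ : Measure Ω),
          IsProbabilityMeasure μ →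
          ∀ (ℱ : Filtration ℕ mΩ)
            (θ hloss hnorm : ℕ → Ω → EuclideanSpace ℝ (Fin d)),
            (∀ t, StronglyMeasurable[ℱ t] (θ t)) →
            (∀ t, StronglyMeasurable[ℱ (t + 1)] (hloss t)) →
            (∀ t, StronglyMeasurable[ℱ (t + 1)] (hnorm t)) →
            (∀ t, 1 ≤ t →
              μ[hloss t|ℱ t] =ᵐ[μ] fun ω => gradient Loracle (θ t ω)) →
            (∀ t, 1 ≤ t → ∀ᵐ ω ∂μ, ‖hloss t ω‖ ≤ Gt) →
            (∀ t, 1 ≤ t → ∀ᵐ ω ∂μ, ‖hnorm t ω‖ ≤ Gn) →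
            (∀ t, 1 ≤ t → θ (t + 1) = fun ω => θ t ω -
              (η₀ / Real.sqrt t) •
                (hloss t ω + (α * (ρ₀ / Real.sqrt t)) • hnorm t ω)) →
            ∀ T : ℕ, 1 ≤ T →
              (1 / T : ℝ) * ∑ t ∈ Finset.Icc 1 T,
                  ∫ ω, ‖gradient Loracle (θ t ω)‖ ^ 2 ∂μ
                ≤ (C₁ + C₂ * Real.log T) / Real.sqrt T := by
  obtain ⟨B, hB⟩ : ∃ B : ℝ, B = Real.sqrt (4 * γ₁ * M) := ⟨_, rfl⟩
  obtain ⟨D, hD⟩ : ∃ D : ℝ, D = Gt + α * ρ₀ * Gn := ⟨_, rfl⟩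
  obtain ⟨K, hK⟩ : ∃ K : ℝ,
    K = η₀ * (α * ρ₀ * B * Gn) + γ₁ / 2 * η₀ ^ 2 * D ^ 2 := ⟨_, rfl⟩
  refine ⟨(2 * M + K) / η₀, K / η₀, ?_⟩
  intro d L hdiff hlip hbdd Ω mΩ μ hprob ℱ θ hloss hnorm hθ hhl hhn hcond hlb hnb hupd T hT
  have hM0 : 0 ≤ M := (abs_nonneg _).trans (hbdd 0)
  have hB0 : 0 ≤ B := hB ▸ Real.sqrt_nonneg _
  have hD0 : 0 ≤ D := by
    rw [hD]; positivity
  have hK0 : 0 ≤ K := by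
    rw [hK]; positivity
  have hdes := fun x y => gam_descent hdiff hγ₁ hlip x y
  have hgrad2 : ∀ z, ‖gradient L z‖ ^ 2 ≤ 4 * γ₁ * M :=
    gam_grad_bound hdiff hγ₁ hlip hbdd hdes
  have hgradB : ∀ z, ‖gradient L z‖ ≤ B := by
    intro z
    rw [hB]
    calc ‖gradient L z‖ = Real.sqrt (‖gradient L z‖ ^ 2) :=
          (Real.sqrt_sq (norm_nonneg _)).symm
    _ ≤ Real.sqrt (4 * γ₁ * M) := Real.sqrt_le_sqrt (hgrad2 z)
  have hcontL : Continuous L := hdiff.continuous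
  have hcontg : Continuous (gradient L) := by
    have : LipschitzWith γ₁.toNNReal (gradient L) := by
      refine LipschitzWith.of_dist_le_mul fun a b => ?_
      rw [dist_eq_norm, dist_eq_norm, Real.coe_toNNReal γ₁ hγ₁]
      exact hlip a b
    exact this.continuous
  have hθm : ∀ t, StronglyMeasurable[mΩ] (θ t) := fun t => (hθ t).mono (ℱ.le t)
  have hgm : ∀ t, StronglyMeasurable[ℱ t] fun ω => gradient L (θ t ω) := fun t =>
    hcontg.comp_stronglyMeasurable (hθ t)
  have hLint : ∀ t, Integrable (fun ω => L (θ t ω)) μ := fun t =>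
    (integrable_const M).mono' (hcontL.comp_stronglyMeasurable (hθm t)).aestronglyMeasurable
      (ae_of_all _ fun ω => by simpa [Real.norm_eq_abs] using hbdd (θ t ω))
  obtain ⟨a, ha⟩ : ∃ a : ℕ → ℝ, a = fun t => ∫ ω, L (θ t ω) ∂μ := ⟨_, rfl⟩
  have hEnn : ∀ t, 0 ≤ ∫ ω, ‖gradient L (θ t ω)‖ ^ 2 ∂μ := fun t =>
    integral_nonneg fun ω => by positivity
  have hTpos : (0:ℝ) < T := by exact_mod_cast hT
  have hsqT : 0 < Real.sqrt T := Real.sqrt_pos.mpr hTpos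
  -- the key per-step inequality
  have key : ∀ t ∈ Finset.Icc 1 T,
      (η₀ / Real.sqrt T) * ∫ ω, ‖gradient L (θ t ω)‖ ^ 2 ∂μ
        ≤ (a t - a (t + 1)) + K * (1 / (t:ℝ)) := by
    intro t htmem
    rw [Finset.mem_Icc] at htmem
    obtain ⟨ht1, htT⟩ := htmem
    have htpos : (0:ℝ) < t := by exact_mod_cast ht1
    have hsq1 : 1 ≤ Real.sqrt t := by
      rw [show (1:ℝ) = Real.sqrt 1 by simp]
      exact Real.sqrt_le_sqrt (by exact_mod_cast ht1)
    have hsqt : 0 < Real.sqrt t := lt_of_lt_of_le one_pos hsq1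
    obtain ⟨st, hst⟩ : ∃ s : ℝ, s = η₀ / Real.sqrt t := ⟨_, rfl⟩
    obtain ⟨ct, hct⟩ : ∃ c : ℝ, c = α * (ρ₀ / Real.sqrt t) := ⟨_, rfl⟩
    have hst0 : 0 < st := by rw [hst]; positivity
    have hct0 : 0 ≤ ct := by rw [hct]; positivity
    have hctle : ct ≤ α * ρ₀ := by
      rw [hct]
      exact mul_le_mul_of_nonneg_left (div_le_self hρ₀.le hsq1) hα
    have hsc : st * ct = η₀ * (α * ρ₀) * (1 / (t:ℝ)) := by
      have hne : Real.sqrt t ≠ 0 := ne_of_gt hsqt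
      rw [hst, hct]
      field_simp
      rw [Real.sq_sqrt htpos.le]; ring
    have hs2 : st ^ 2 = η₀ ^ 2 * (1 / (t:ℝ)) := by
      rw [hst, div_pow, Real.sq_sqrt htpos.le]
      ring
    -- integrability of the inner product term
    have hlossm : AEStronglyMeasurable (hloss t) μ :=
      ((hhl t).mono (ℱ.le (t+1))).aestronglyMeasurable
    have hinm : AEStronglyMeasurable (fun ω => ⟪gradient L (θ t ω), hloss t ω⟫) μ :=
      ((hgm t).mono (ℱ.le t)).aestronglyMeasurable.inner hlossm
    have hinint : Integrable (fun ω => ⟪gradient L (θ t ω), hloss t ω⟫) μ := by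
      refine (integrable_const (B * Gt)).mono' hinm ?_
      filter_upwards [hlb t ht1] with ω h1
      calc ‖⟪gradient L (θ t ω), hloss t ω⟫‖
          ≤ ‖gradient L (θ t ω)‖ * ‖hloss t ω‖ := norm_inner_le_norm _ _
      _ ≤ B * Gt := mul_le_mul (hgradB _) h1 (norm_nonneg _) hB0
    -- pointwise a.e. descent inequality
    have hae : ∀ᵐ ω ∂μ, st * ⟪gradient L (θ t ω), hloss t ω⟫
        ≤ L (θ t ω) - L (θ (t+1) ω) + K * (1 / (t:ℝ)) := by
      filter_upwards [hlb t ht1, hnb t ht1] with ω h1 h2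
      obtain ⟨w, hw⟩ : ∃ w, w = hloss t ω + ct • hnorm t ω := ⟨_, rfl⟩
      have hup : θ (t+1) ω = θ t ω - st • w := by
        rw [hupd t ht1, hw, hst, hct]
      have hdd := hdes (θ t ω) (θ (t+1) ω)
      rw [hup] at hdd ⊢
      have hsub : θ t ω - st • w - θ t ω = -(st • w) := by abel
      rw [hsub] at hdd
      have hin : ⟪gradient L (θ t ω), -(st • w)⟫
          = -(st * (⟪gradient L (θ t ω), hloss t ω⟫
              + ct * ⟪gradient L (θ t ω), hnorm t ω⟫)) := by
        rw [inner_neg_right, real_inner_smul_right, hw, inner_add_right,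
          real_inner_smul_right]
      rw [hin] at hdd
      have hnw : ‖w‖ ≤ D := by
        rw [hw, hD]
        calc ‖hloss t ω + ct • hnorm t ω‖
            ≤ ‖hloss t ω‖ + ‖ct • hnorm t ω‖ := norm_add_le _ _
        _ = ‖hloss t ω‖ + ct * ‖hnorm t ω‖ := by
            rw [norm_smul, Real.norm_eq_abs, abs_of_nonneg hct0]
        _ ≤ Gt + α * ρ₀ * Gn := by
            have h3 := mul_le_mul hctle h2 (norm_nonneg _) (mul_nonneg hα hρ₀.le)
            linarith
      have hnw2 : ‖-(st • w)‖ ^ 2 ≤ st ^ 2 * D ^ 2 := by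
        rw [norm_neg, norm_smul, Real.norm_eq_abs, abs_of_nonneg hst0.le, mul_pow]
        have hw2 : ‖w‖ ^ 2 ≤ D ^ 2 := by nlinarith [norm_nonneg w]
        nlinarith [sq_nonneg st]
      have hinn : |⟪gradient L (θ t ω), hnorm t ω⟫| ≤ B * Gn := by
        calc |⟪gradient L (θ t ω), hnorm t ω⟫|
            ≤ ‖gradient L (θ t ω)‖ * ‖hnorm t ω‖ := abs_real_inner_le_norm _ _
        _ ≤ B * Gn := mul_le_mul (hgradB _) h2 (norm_nonneg _) hB0
      have hb1 : -(st * ct * (B * Gn)) ≤ st * ct * ⟪gradient L (θ t ω), hnorm t ω⟫ := by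
        have := neg_abs_le ⟪gradient L (θ t ω), hnorm t ω⟫
        have h4 : -(B * Gn) ≤ ⟪gradient L (θ t ω), hnorm t ω⟫ := by
          have := abs_le.mp hinn
          linarith [this.1]
        nlinarith [mul_nonneg hst0.le hct0]
      have hb2 : γ₁ / 2 * ‖-(st • w)‖ ^ 2 ≤ γ₁ / 2 * (st ^ 2 * D ^ 2) :=
        mul_le_mul_of_nonneg_left hnw2 (by linarith)
      have heq1 : st * ct * (B * Gn) = η₀ * (α * ρ₀) * (1 / (t:ℝ)) * (B * Gn) := by
        rw [hsc]
      have heq2 : γ₁ / 2 * (st ^ 2 * D ^ 2) = γ₁ / 2 * (η₀ ^ 2 * (1 / (t:ℝ)) * D ^ 2) := by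
        rw [hs2]
      have hKt : K * (1 / (t:ℝ)) = η₀ * (α * ρ₀) * (1 / (t:ℝ)) * (B * Gn)
          + γ₁ / 2 * (η₀ ^ 2 * (1 / (t:ℝ)) * D ^ 2) := by
        rw [hK]; ring
      nlinarith [hdd, hb1, hb2, heq1, heq2, hKt]
    -- integrate
    have hIl : Integrable (fun ω => st * ⟪gradient L (θ t ω), hloss t ω⟫) μ :=
      hinint.const_mul st
    have hIsub : Integrable (fun ω => L (θ t ω) - L (θ (t+1) ω)) μ :=
      (hLint t).sub (hLint (t+1))
    have hIr : Integrable
        (fun ω => L (θ t ω) - L (θ (t+1) ω) + K * (1 / (t:ℝ))) μ :=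
      hIsub.add (integrable_const _)
    have hImono := integral_mono_ae hIl hIr hae
    rw [integral_add hIsub (integrable_const _),
      integral_sub (hLint t) (hLint (t+1)), integral_const,
      integral_const_mul] at hImono
    simp only [measure_univ, probReal_univ, ENNReal.toReal_one, smul_eq_mul, one_mul] at hImono
    -- conditional expectation identity
    have hEq : ∫ ω, ⟪gradient L (θ t ω), hloss t ω⟫ ∂μ
        = ∫ ω, ‖gradient L (θ t ω)‖ ^ 2 ∂μ :=
      gam_inner_condexp (ℱ.le t) (hgm t) (fun ω => hgradB _) hlossm (hlb t ht1)
        (hcond t ht1)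
    rw [hEq] at hImono
    have hstep : st * ∫ ω, ‖gradient L (θ t ω)‖ ^ 2 ∂μ
        ≤ a t - a (t+1) + K * (1 / (t:ℝ)) := by
      rw [ha]
      exact hImono
    have hsle : η₀ / Real.sqrt T ≤ st := by
      rw [hst]
      exact div_le_div_of_nonneg_left hη₀.le hsqt
        (Real.sqrt_le_sqrt (by exact_mod_cast htT))
    calc (η₀ / Real.sqrt T) * ∫ ω, ‖gradient L (θ t ω)‖ ^ 2 ∂μ
        ≤ st * ∫ ω, ‖gradient L (θ t ω)‖ ^ 2 ∂μ :=
          mul_le_mul_of_nonneg_right hsle (hEnn t)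
    _ ≤ a t - a (t+1) + K * (1 / (t:ℝ)) := hstep
  -- sum the key inequality
  have hsum := Finset.sum_le_sum key
  rw [← Finset.mul_sum] at hsum
  have hsplit : ∑ t ∈ Finset.Icc 1 T, ((a t - a (t + 1)) + K * (1 / (t:ℝ)))
      = (a 1 - a (T + 1)) + K * ∑ t ∈ Finset.Icc 1 T, (1 / (t:ℝ)) := by
    rw [Finset.sum_add_distrib, gam_telescope, ← Finset.mul_sum]
  rw [hsplit] at hsum
  have haM : ∀ s : ℕ, |a s| ≤ M := by
    intro s
    rw [ha]
    have h5 := norm_integral_le_of_norm_le_const (μ := μ)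
      (C := M) (f := fun ω => L (θ s ω))
      (ae_of_all μ fun ω => by simpa [Real.norm_eq_abs] using hbdd (θ s ω))
    simpa [Real.norm_eq_abs, measure_univ] using h5
  have hlog0 : 0 ≤ Real.log T := Real.log_nonneg (by exact_mod_cast hT)
  have hharm : ∑ t ∈ Finset.Icc 1 T, (1 / (t:ℝ)) ≤ 1 + Real.log T := gam_harmonic T
  obtain ⟨R, hR⟩ : ∃ R : ℝ, R = 2 * M + K + K * Real.log T := ⟨_, rfl⟩
  have hsum2 : (η₀ / Real.sqrt T) * ∑ t ∈ Finset.Icc 1 T,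
      ∫ ω, ‖gradient L (θ t ω)‖ ^ 2 ∂μ ≤ R := by
    have h6 := abs_le.mp (haM 1)
    have h7 := abs_le.mp (haM (T + 1))
    have h8 : K * ∑ t ∈ Finset.Icc 1 T, (1 / (t:ℝ)) ≤ K * (1 + Real.log T) :=
      mul_le_mul_of_nonneg_left hharm hK0
    rw [hR]
    nlinarith [hsum]
  obtain ⟨S, hS⟩ : ∃ S : ℝ,
    S = ∑ t ∈ Finset.Icc 1 T, ∫ ω, ‖gradient L (θ t ω)‖ ^ 2 ∂μ := ⟨_, rfl⟩
  rw [← hS] at hsum2 ⊢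
  have hS0 : 0 ≤ S := hS ▸ Finset.sum_nonneg fun t _ => hEnn t
  have hR0 : 0 ≤ R := by rw [hR]; nlinarith
  have hTT : Real.sqrt T * Real.sqrt T = (T:ℝ) := Real.mul_self_sqrt hTpos.le
  have h1 : η₀ * S ≤ R * Real.sqrt T := by
    rw [div_mul_eq_mul_div] at hsum2
    exact (div_le_iff₀ hsqT).mp hsum2
  have h2 : η₀ * S * Real.sqrt T ≤ R * (T:ℝ) := by
    calc η₀ * S * Real.sqrt T ≤ R * Real.sqrt T * Real.sqrt T :=
          mul_le_mul_of_nonneg_right h1 hsqT.le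
    _ = R * (T:ℝ) := by rw [mul_assoc, hTT]
  calc (1 / (T:ℝ)) * S = S / (T:ℝ) := by ring
    _ ≤ R / (η₀ * Real.sqrt T) := by
        rw [div_le_div_iff₀ hTpos (by positivity)]
        nlinarith
    _ = ((2 * M + K) / η₀ + K / η₀ * Real.log T) / Real.sqrt T := by
        rw [hR]
        field_simp
end GamAux
end
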